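/- Fix a nonzero even compactly supported continuous function h : ℝ → ℂ. Then the function λ ↦ |ℱh(λ)| e^{λ/2} is unbounded on [0,∞), where ℱh is the Fourier transform of h. -/

import Mathlib

open Complex MeasureTheory

section Aux
open Set Filter FourierTransform
open scoped Real Topology

private lemma aux_integrable_exp_neg_abs {a : ℝ} (ha : 0 < a) :
    Integrable (fun x : ℝ => Real.exp (-a * |x|)) := by
  rw [← integrableOn_univ, ← Iio_union_Ici (a := (0:ℝ)), integrableOn_union,
    integrableOn_Ici_iff_integrableOn_Ioi]
  have hIoi : IntegrableOn (fun x : ℝ => Real.exp (-a * |x|)) (Ioi 0) :=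
    (exp_neg_integrableOn_Ioi 0 ha).congr_fun
      (fun x hx => by rw [abs_of_pos hx]) measurableSet_Ioi
  refine ⟨?_, hIoi⟩
  rw [← (Measure.measurePreserving_neg (volume : Measure ℝ)).integrableOn_comp_preimage
      (Homeomorph.neg ℝ).measurableEmbedding]
  simp only [Function.comp_def, abs_neg, neg_preimage, neg_Iio, neg_neg, neg_zero]
  exact hIoi

private lemma aux_integrable_abs_mul_exp_neg_abs {a : ℝ} (ha : 0 < a) :
    Integrable (fun x : ℝ => |x| * Real.exp (-a * |x|)) := by
  have h2 : 0 < a / 2 := half_pos ha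
  apply ((aux_integrable_exp_neg_abs h2).const_mul (2 / a)).mono'
  · exact (_root_.continuous_abs.mul
      (Real.continuous_exp.comp (continuous_const.mul _root_.continuous_abs))).aestronglyMeasurable
  · filter_upwards with x
    rw [Real.norm_eq_abs, _root_.abs_of_nonneg (by positivity)]
    have h3 : a / 2 * |x| ≤ Real.exp (a / 2 * |x|) := by
      have := Real.add_one_le_exp (a / 2 * |x|); linarith
    have hx : |x| ≤ 2 / a * Real.exp (a / 2 * |x|) := by
      have h4 := mul_le_mul_of_nonneg_left h3 (by positivity : (0:ℝ) ≤ 2 / a)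
      calc |x| = 2 / a * (a / 2 * |x|) := by field_simp
      _ ≤ 2 / a * Real.exp (a / 2 * |x|) := h4
    calc |x| * Real.exp (-a * |x|)
        ≤ 2 / a * Real.exp (a / 2 * |x|) * Real.exp (-a * |x|) :=
          mul_le_mul_of_nonneg_right hx (Real.exp_nonneg _)
      _ = 2 / a * Real.exp (-(a / 2) * |x|) := by
          rw [mul_assoc, ← Real.exp_add]; congr 2; ring

end Aux

open Set Filter FourierTransform
open scoped Real Topology

/-- For a nonzero, even, compactly supported continuous function `h : ℝ → ℂ`,
the function `λ ↦ |ℱh(λ)| e^{λ/2}` is unbounded on `[0,∞)`, where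
`ℱh(λ) = ∫ h(t) e^{−iλt} dt`. -/
theorem fourier_of_compact_support_not_exp_decaying
    (h : ℝ → ℂ) (hcont : Continuous h) (hsupp : HasCompactSupport h)
    (heven : ∀ t : ℝ, h (-t) = h t) (hne : h ≠ 0) :
    ∀ C : ℝ, ∃ lam : ℝ, 0 ≤ lam ∧
      C < ‖∫ t : ℝ, h t * Complex.exp (-I * lam * t)‖ * Real.exp (lam / 2) := by
  by_contra hcon
  push_neg at hcon
  obtain ⟨C, hC⟩ := hcon
  set F : ℝ → ℂ := fun lam => ∫ t : ℝ, h t * Complex.exp (-I * lam * t) with hFdef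
  have hC0 : 0 ≤ C := by
    have := hC 0 le_rfl
    have h0 : (0:ℝ) ≤ ‖F 0‖ * Real.exp (0 / 2) := by positivity
    linarith
  -- F is even
  have hFeven : ∀ lam : ℝ, F (-lam) = F lam := by
    intro lam
    have h1 : (∫ t : ℝ, h (-1 * t) * Complex.exp (-I * lam * ((-1 * t : ℝ) : ℂ)))
        = |((-1:ℝ))⁻¹| • ∫ t : ℝ, h t * Complex.exp (-I * lam * t) :=
      MeasureTheory.Measure.integral_comp_mul_left
        (fun t => h t * Complex.exp (-I * (lam:ℝ) * t)) (-1)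
    rw [show |((-1:ℝ))⁻¹| = 1 by norm_num, one_smul] at h1
    have h2 : ∀ t : ℝ, h (-1 * t) * Complex.exp (-I * lam * ((-1 * t : ℝ) : ℂ))
        = h t * Complex.exp (-I * ((-lam : ℝ) : ℂ) * t) := by
      intro t
      rw [show (-1 : ℝ) * t = -t by ring, heven t]
      congr 1
      push_cast
      ring
    simp_rw [h2] at h1
    exact h1
  -- relation with the mathlib Fourier transform
  have hFour : ∀ ξ : ℝ, 𝓕 h ξ = F (2 * π * ξ) := by
    intro ξ
    rw [Real.fourier_real_eq_integral_exp_smul]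
    refine integral_congr_ae (Eventually.of_forall fun t => ?_)
    simp only [smul_eq_mul]
    rw [mul_comm]
    congr 1
    push_cast
    ring
  -- decay bound for 𝓕 h
  have hbound0 : ∀ ξ : ℝ, 0 ≤ ξ → ‖𝓕 h ξ‖ ≤ C * Real.exp (-π * ξ) := by
    intro ξ hξ
    rw [hFour ξ]
    have h2 : ‖F (2 * π * ξ)‖ * Real.exp ((2 * π * ξ) / 2) ≤ C := hC _ (by positivity)
    have hcancel : ∀ y x : ℝ, y = y * Real.exp x * Real.exp (-x) := by
      intro y x; rw [mul_assoc, ← Real.exp_add]; simp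
    calc ‖F (2 * π * ξ)‖
        = (‖F (2 * π * ξ)‖ * Real.exp ((2 * π * ξ) / 2)) * Real.exp (-((2 * π * ξ) / 2)) :=
          hcancel _ _
      _ ≤ C * Real.exp (-((2 * π * ξ) / 2)) :=
          mul_le_mul_of_nonneg_right h2 (Real.exp_nonneg _)
      _ = C * Real.exp (-π * ξ) := by congr 2; ring
  have hbound : ∀ ξ : ℝ, ‖𝓕 h ξ‖ ≤ C * Real.exp (-π * |ξ|) := by
    intro ξ
    rcases le_or_gt 0 ξ with hξ | hξ
    · rw [_root_.abs_of_nonneg hξ]; exact hbound0 ξ hξ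
    · have he : F (2 * π * ξ) = F (2 * π * (-ξ)) := by
        have := hFeven (2 * π * (-ξ))
        rw [show -(2 * π * (-ξ)) = 2 * π * ξ by ring] at this
        exact this
      have h3 : ‖𝓕 h (-ξ)‖ ≤ C * Real.exp (-π * (-ξ)) := hbound0 (-ξ) (by linarith)
      rw [hFour, he, ← hFour, _root_.abs_of_neg hξ]
      exact h3
  have hinth : Integrable h := hcont.integrable_of_hasCompactSupport hsupp
  have hFcont : Continuous (𝓕 h) :=
    VectorFourier.fourierIntegral_continuous Real.continuous_fourierChar
      (by exact continuous_inner) hinth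
  have hintF : Integrable (𝓕 h) := by
    apply ((aux_integrable_exp_neg_abs Real.pi_pos).const_mul C).mono'
      hFcont.aestronglyMeasurable
    filter_upwards with ξ using hbound ξ
  -- the holomorphic extension
  set g : ℂ → ℂ := fun w => ∫ ξ : ℝ, 𝓕 h ξ * Complex.exp (((2 * π * ξ : ℝ) : ℂ) * I * w)
    with hgdef
  -- master pointwise bound
  have hmaster : ∀ (w : ℂ) (ξ : ℝ),
      ‖𝓕 h ξ * Complex.exp (((2 * π * ξ : ℝ) : ℂ) * I * w)‖
        ≤ C * Real.exp (-(π - 2 * π * |w.im|) * |ξ|) := by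
    intro w ξ
    rw [norm_mul, Complex.norm_exp]
    have hre : (((2 * π * ξ : ℝ) : ℂ) * I * w).re = -(2 * π * ξ * w.im) := by
      simp [Complex.mul_re, Complex.mul_im]
    rw [hre]
    have h1 : Real.exp (-(2 * π * ξ * w.im)) ≤ Real.exp (2 * π * |w.im| * |ξ|) := by
      apply Real.exp_le_exp.2
      calc -(2 * π * ξ * w.im) ≤ |2 * π * ξ * w.im| := neg_le_abs _
        _ = 2 * π * |ξ| * |w.im| := by
            rw [abs_mul, abs_mul, abs_mul, _root_.abs_two, _root_.abs_of_pos Real.pi_pos]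
        _ = 2 * π * |w.im| * |ξ| := by ring
    calc ‖𝓕 h ξ‖ * Real.exp (-(2 * π * ξ * w.im))
        ≤ (C * Real.exp (-π * |ξ|)) * Real.exp (2 * π * |w.im| * |ξ|) :=
          mul_le_mul (hbound ξ) h1 (Real.exp_nonneg _)
            (mul_nonneg hC0 (Real.exp_nonneg _))
      _ = C * Real.exp (-(π - 2 * π * |w.im|) * |ξ|) := by
          rw [mul_assoc, ← Real.exp_add]; congr 2; ring
  have hmaster2 : ∀ (b : ℝ) (w : ℂ), |w.im| ≤ b → ∀ ξ : ℝ,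
      ‖𝓕 h ξ * Complex.exp (((2 * π * ξ : ℝ) : ℂ) * I * w)‖
        ≤ C * Real.exp (-(π - 2 * π * b) * |ξ|) := by
    intro b w hw ξ
    refine (hmaster w ξ).trans ?_
    apply mul_le_mul_of_nonneg_left _ hC0
    apply Real.exp_le_exp.2
    have : π - 2 * π * b ≤ π - 2 * π * |w.im| := by nlinarith [Real.pi_pos]
    nlinarith [abs_nonneg ξ]
  -- the strip
  set S : Set ℂ := {w : ℂ | |w.im| < 1 / 2} with hSdef
  have hS_open : IsOpen S := by
    have : Continuous fun w : ℂ => |w.im| := continuous_abs.comp Complex.continuous_im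
    exact isOpen_lt this continuous_const
  have hS_conv : Convex ℝ S := by
    have h1 : Convex ℝ (Complex.imLm ⁻¹' Ioo (-(1/2) : ℝ) (1/2)) :=
      (convex_Ioo (-(1/2) : ℝ) (1/2)).linear_preimage Complex.imLm
    have h2 : S = Complex.imLm ⁻¹' Ioo (-(1/2) : ℝ) (1/2) := by
      ext w
      simp [hSdef, abs_lt, Complex.imLm]
    rw [h2]; exact h1
  -- differentiability of g on S
  have hdiff : DifferentiableOn ℂ g S := by
    intro w₀ hw₀
    apply DifferentiableAt.differentiableWithinAt
    set b : ℝ := (|w₀.im| + 1 / 2) / 2 with hbdef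
    have hb1 : |w₀.im| < b := by
      have : |w₀.im| < 1 / 2 := hw₀
      rw [hbdef]; linarith
    have hb2 : b < 1 / 2 := by
      have : |w₀.im| < 1 / 2 := hw₀
      rw [hbdef]; linarith
    have hπb : 0 < π - 2 * π * b := by nlinarith [Real.pi_pos]
    set ε : ℝ := b - |w₀.im| with hεdef
    have hε : 0 < ε := by rw [hεdef]; linarith
    have hball : ∀ w ∈ Metric.ball w₀ ε, |w.im| ≤ b := by
      intro w hw
      have h1 : |w.im - w₀.im| ≤ ‖w - w₀‖ := by
        have := Complex.abs_im_le_norm (w - w₀)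
        rw [Complex.sub_im] at this
        exact this
      have h2 : ‖w - w₀‖ < ε := by
        rw [← dist_eq_norm]
        exact Metric.mem_ball.mp hw
      calc |w.im| ≤ |w₀.im| + |w.im - w₀.im| := by
            have := abs_sub_abs_le_abs_sub w.im w₀.im
            have := abs_add_le w₀.im (w.im - w₀.im)
            calc |w.im| = |w₀.im + (w.im - w₀.im)| := by ring_nf
              _ ≤ |w₀.im| + |w.im - w₀.im| := abs_add_le _ _
        _ ≤ |w₀.im| + ε := by linarith
        _ = b := by rw [hεdef]; ring
    have key := hasDerivAt_integral_of_dominated_loc_of_deriv_le (μ := volume)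
      (F := fun (w : ℂ) (ξ : ℝ) => 𝓕 h ξ * Complex.exp (((2 * π * ξ : ℝ) : ℂ) * I * w))
      (F' := fun (w : ℂ) (ξ : ℝ) => 𝓕 h ξ *
        (Complex.exp (((2 * π * ξ : ℝ) : ℂ) * I * w) * (((2 * π * ξ : ℝ) : ℂ) * I * 1)))
      (x₀ := w₀) (s := Metric.ball w₀ ε)
      (bound := fun ξ : ℝ => C * (2 * π) * (|ξ| * Real.exp (-(π - 2 * π * b) * |ξ|)))
      (Metric.ball_mem_nhds w₀ hε) ?_ ?_ ?_ ?_ ?_ ?_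
    · exact key.2.differentiableAt
    · -- measurability of F w for w near w₀
      filter_upwards with w
      apply Continuous.aestronglyMeasurable
      exact hFcont.mul (Complex.continuous_exp.comp (by fun_prop))
    · -- integrability of F w₀
      apply ((aux_integrable_exp_neg_abs hπb).const_mul C).mono'
        (hFcont.mul (Complex.continuous_exp.comp (by fun_prop))).aestronglyMeasurable
      filter_upwards with ξ using hmaster2 b w₀ hb1.le ξ
    · -- measurability of F' w₀
      apply Continuous.aestronglyMeasurable
      exact hFcont.mul ((Complex.continuous_exp.comp (by fun_prop)).mul (by fun_prop))
    · -- bound on F'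
      filter_upwards with ξ
      intro w hw
      have hwb : |w.im| ≤ b := hball w hw
      have hnormc : ‖(((2 * π * ξ : ℝ) : ℂ) * I * 1)‖ = 2 * π * |ξ| := by
        rw [mul_one, norm_mul, Complex.norm_I,
          Complex.norm_real, mul_one, Real.norm_eq_abs, abs_mul, abs_mul, _root_.abs_two,
          _root_.abs_of_pos Real.pi_pos]
      calc ‖𝓕 h ξ * (Complex.exp (((2 * π * ξ : ℝ) : ℂ) * I * w) *
              (((2 * π * ξ : ℝ) : ℂ) * I * 1))‖
          = ‖𝓕 h ξ * Complex.exp (((2 * π * ξ : ℝ) : ℂ) * I * w)‖ *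
              ‖(((2 * π * ξ : ℝ) : ℂ) * I * 1)‖ := by
            rw [← mul_assoc, norm_mul, norm_mul]
        _ ≤ (C * Real.exp (-(π - 2 * π * b) * |ξ|)) * (2 * π * |ξ|) := by
            rw [hnormc]
            exact mul_le_mul_of_nonneg_right (hmaster2 b w hwb ξ) (by positivity)
        _ = C * (2 * π) * (|ξ| * Real.exp (-(π - 2 * π * b) * |ξ|)) := by ring
    · -- integrability of the bound
      exact (aux_integrable_abs_mul_exp_neg_abs hπb).const_mul (C * (2 * π))
    · -- differentiability of the integrand
      filter_upwards with ξ
      intro w hw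
      exact (((hasDerivAt_id w).const_mul (((2 * π * ξ : ℝ) : ℂ) * I)).cexp).const_mul (𝓕 h ξ)
  have hanalytic : AnalyticOnNhd ℂ g S := hdiff.analyticOnNhd hS_open
  -- g agrees with h on the reals
  have hgt : ∀ t : ℝ, g (t : ℂ) = h t := by
    intro t
    have hinv : 𝓕⁻ (𝓕 h) t = h t := hinth.fourierInv_fourier_eq hintF hcont.continuousAt
    rw [← hinv, Real.fourierInv_eq_fourier_neg,
      Real.fourier_real_eq_integral_exp_smul]
    show (∫ ξ : ℝ, 𝓕 h ξ * Complex.exp (((2 * π * ξ : ℝ) : ℂ) * I * (t : ℂ))) = _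
    refine integral_congr_ae (Eventually.of_forall fun ξ => ?_)
    simp only [smul_eq_mul]
    rw [mul_comm]
    congr 1
    push_cast
    ring
  -- support bound
  obtain ⟨R, hR⟩ : ∃ R : ℝ, ∀ t : ℝ, R < |t| → h t = 0 := by
    obtain ⟨R, hR⟩ := hsupp.isCompact.isBounded.subset_closedBall 0
    refine ⟨R, fun t ht => ?_⟩
    by_contra hne'
    have : t ∈ tsupport h := subset_tsupport h (by simp [Function.mem_support, hne'])
    have := hR this
    rw [Metric.mem_closedBall, Real.dist_eq, sub_zero] at this
    linarith
  -- accumulation of zeros at z₀ = R + 1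
  have hz₀S : ((R + 1 : ℝ) : ℂ) ∈ S := by simp [hSdef]
  have htend : Tendsto (fun n : ℕ => ((R + 1 : ℝ) : ℂ) + ((1 / (n + 1) : ℝ) : ℂ)) atTop
      (𝓝[≠] ((R + 1 : ℝ) : ℂ)) := by
    apply tendsto_nhdsWithin_of_tendsto_nhds_of_eventually_within
    · have h1 : Tendsto (fun n : ℕ => (1 / (n + 1) : ℝ)) atTop (𝓝 0) :=
        tendsto_one_div_add_atTop_nhds_zero_nat
      have h2 := (Complex.continuous_ofReal.tendsto 0).comp h1
      have h3 := tendsto_const_nhds (x := ((R + 1 : ℝ) : ℂ)) (f := atTop (α := ℕ)) |>.add h2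
      simp only [Complex.ofReal_zero, add_zero] at h3
      exact h3
    · filter_upwards with n
      simp only [Set.mem_compl_iff, Set.mem_singleton_iff]
      intro hcontra
      have h4 : ((1 / (n + 1) : ℝ) : ℂ) = 0 := by
        have := add_eq_left.mp hcontra
        exact this
      rw [Complex.ofReal_eq_zero] at h4
      have : (0:ℝ) < 1 / (n + 1 : ℝ) := by positivity
      linarith [h4 ▸ this]
  have hfreq : ∃ᶠ z in 𝓝[≠] ((R + 1 : ℝ) : ℂ), g z = 0 := by
    apply htend.frequently
    apply Frequently.of_forall
    intro n
    have heq : ((R + 1 : ℝ) : ℂ) + ((1 / (n + 1) : ℝ) : ℂ) = ((R + 1 + 1 / (n + 1) : ℝ) : ℂ) := by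
      push_cast; ring
    rw [heq, hgt]
    apply hR
    have hpos : (0:ℝ) < 1 / (n + 1 : ℝ) := by positivity
    calc R < R + 1 + 1 / (n + 1 : ℝ) := by linarith
      _ ≤ |R + 1 + 1 / (n + 1 : ℝ)| := le_abs_self _
  have hgzero : EqOn g 0 S :=
    hanalytic.eqOn_zero_of_preconnected_of_frequently_eq_zero hS_conv.isPreconnected hz₀S hfreq
  apply hne
  funext t
  have htS : (t : ℂ) ∈ S := by simp [hSdef]
  have := hgzero htS
  rw [hgt t] at this
  simpa using this
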